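/- Let k and n be positive integers, set d = h = 2^k and m = n·2^k, take c = 1 and U0 = 0, and let α, β ∈ ℝ^h be nonnegative. Define W' = {(V, U) : V ∈ ℝ^{1×h}, U ∈ ℝ^{h×d}, |V_j| ≤ α_j and ‖u_j‖₂ ≤ β_j for all j ∈ [h], and ‖U‖₂ ≤ max_j β_j}, and F_{W'} = {x ↦ V[Ux]_+ : (V,U) ∈ W'}. Then there exists a sample S = {x_1,…,x_m} ⊂ ℝ^d in which each x_i is a standard basis vector of ℝ^d (with each basis vector appearing exactly n times) such that E_ξ [ sup_{f ∈ F_{W'}} Σ_{i=1}^m ξ_i f(x_i) ] ≥ (Σ_{j=1}^h α_j β_j) √(2m) / 8, where ξ is uniform on {±1}^m; in particular the empirical Rademacher complexity satisfies R_S(F_{W'}) ≥ (Σ_{j=1}^h α_j β_j) √(2m) / (8m). -/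

import Mathlib

noncomputable section

open Finset

/-- Euclidean norm of a finite-dimensional real vector. -/
def euclNorm {n : ℕ} (x : Fin n → ℝ) : ℝ := Real.sqrt (∑ i, (x i) ^ 2)

/-- ReLU activation. -/
def relu (t : ℝ) : ℝ := max t 0

/-- Two layer ReLU network with scalar output, `x ↦ V [U x]₊`. -/
def netS {d h : ℕ} (V : Fin h → ℝ) (U : Matrix (Fin h) (Fin d) ℝ)
    (x : Fin d → ℝ) : ℝ :=
  ∑ j, V j * relu (∑ k, U j k * x k)

/-- Spectral norm (ℓ₂ operator norm) of a real matrix. -/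
def specNorm {a b : ℕ} (M : Matrix (Fin a) (Fin b) ℝ) : ℝ :=
  ⨆ v : {v : Fin b → ℝ // euclNorm v ≤ 1}, euclNorm (M.mulVec v.val)

/-- Sign associated to a boolean: `±1`. -/
def sg (b : Bool) : ℝ := if b then 1 else -1

namespace RadAux

def zsgn (t : Bool) : ℤ := if t then 1 else -1

lemma sg_eq_zsgn (t : Bool) : sg t = ((zsgn t : ℤ) : ℝ) := by
  cases t <;> simp [sg, zsgn]

def SA (c : ℕ) : ℤ := ∑ f : Fin c → Bool, |∑ l, zsgn (f l)|

def ZC (c : ℕ) : ℤ := ∑ f : Fin c → Bool, if (∑ l, zsgn (f l)) = 0 then 1 else 0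

lemma ZC_nonneg (c : ℕ) : 0 ≤ ZC c := by
  apply Finset.sum_nonneg; intro f _; split <;> norm_num

lemma SA_succ (c : ℕ) : SA (c+1) = 2 * SA c + 2 * ZC c := by
  rw [SA, ← Equiv.sum_comp (Fin.consEquiv (fun _ => Bool)) (fun f => |∑ l, zsgn (f l)|)]
  rw [Fintype.sum_prod_type, Fintype.sum_bool]
  have h : ∀ (t : Bool) (f : Fin c → Bool),
      (∑ l : Fin (c+1), zsgn ((Fin.consEquiv (fun _ => Bool)) (t, f) l))
        = zsgn t + ∑ l, zsgn (f l) := by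
    intro t f
    rw [Fin.sum_univ_succ]
    simp [Fin.consEquiv]
  simp only [h]
  have key : ∀ S : ℤ, |zsgn true + S| + |zsgn false + S|
      = 2 * |S| + 2 * (if S = 0 then 1 else 0) := by
    intro S
    have z1 : zsgn true = 1 := rfl
    have z2 : zsgn false = -1 := rfl
    rw [z1, z2]
    by_cases hS : S = 0
    · subst hS; norm_num
    · simp only [if_neg hS]
      rcases lt_trichotomy S 0 with h | h | h
      · rw [abs_of_neg h, abs_of_nonpos (by omega), abs_of_neg (by omega)]; ring
      · exact absurd h hS
      · rw [abs_of_pos h, abs_of_pos (by omega), abs_of_nonneg (by omega)]; ring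
  rw [← Finset.sum_add_distrib]
  rw [Finset.sum_congr rfl (fun f _ => key (∑ l, zsgn (f l)))]
  rw [Finset.sum_add_distrib, ← Finset.mul_sum, ← Finset.mul_sum]
  rfl


lemma sum_zsgn_eq (c : ℕ) (f : Fin c → Bool) :
    (∑ l, zsgn (f l)) = 2 * ((univ.filter (fun l => f l = true)).card : ℤ) - c := by
  have h : ∀ l, zsgn (f l) = 2 * (if f l = true then (1:ℤ) else 0) - 1 := by
    intro l; cases hfl : f l <;> simp [zsgn]
  rw [Finset.sum_congr rfl (fun l _ => h l), Finset.sum_sub_distrib, ← Finset.mul_sum,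
    Finset.sum_boole, Finset.sum_const, Finset.card_univ, Fintype.card_fin]
  simp

lemma ZC_eq (c : ℕ) : ZC c = if 2 ∣ c then ((c.choose (c/2) : ℕ) : ℤ) else 0 := by
  rw [ZC]
  rw [Finset.sum_congr rfl (fun f _ => by rw [sum_zsgn_eq c f])]
  rw [Finset.sum_boole]
  by_cases hc : 2 ∣ c
  · rw [if_pos hc]
    obtain ⟨q, rfl⟩ := hc
    have hcond : ∀ f : Fin (2*q) → Bool,
        (2 * ((univ.filter (fun l => f l = true)).card : ℤ) - ((2*q : ℕ) : ℤ) = 0)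
          ↔ (univ.filter (fun l => f l = true)).card = q := by
      intro f; push_cast; constructor <;> intro h <;> omega
    rw [Finset.filter_congr (fun f _ => hcond f)]
    congr 1
    rw [Finset.card_bij (fun f _ => univ.filter (fun l => f l = true))
      (by intro f hf
          simp only [Finset.mem_filter, Finset.mem_univ, true_and] at hf
          rw [Finset.mem_powersetCard]
          exact ⟨Finset.subset_univ _, hf⟩)
      (by intro f hf g hg hfg
          funext l
          have := Finset.ext_iff.mp hfg l
          simp only [Finset.mem_filter, Finset.mem_univ, true_and] at this
          cases hfl : f l <;> cases hgl : g l <;> simp [hfl, hgl] at this ⊢ <;> tauto)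
      (by intro A hA
          rw [Finset.mem_powersetCard] at hA
          refine ⟨fun l => decide (l ∈ A), ?_, ?_⟩
          · simp only [Finset.mem_filter, Finset.mem_univ, true_and]
            have hfa : univ.filter (fun l => decide (l ∈ A) = true) = A := by
              ext l; simp
            rw [hfa, hA.2]
          · ext l; simp)]
    rw [Finset.card_powersetCard, Finset.card_univ, Fintype.card_fin]
    norm_num
  · rw [if_neg hc]
    have : ∀ f : Fin c → Bool, ¬ (2 * ((univ.filter (fun l => f l = true)).card : ℤ) - c = 0) := by
      intro f h
      exact hc ⟨(univ.filter (fun l => f l = true)).card, by omega⟩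
    rw [Finset.filter_false_of_mem (fun f _ => this f)]
    simp

lemma cb_bound : ∀ q : ℕ, 1 ≤ q → 16 ^ q ≤ 4 * q * (Nat.centralBinom q)^2 := by
  intro q
  induction q with
  | zero => omega
  | succ q ih =>
    intro _
    by_cases hq : q = 0
    · subst hq
      norm_num [Nat.centralBinom]
    · have ih' := ih (by omega)
      have key := Nat.succ_mul_centralBinom_succ q
      refine Nat.le_of_mul_le_mul_left ?_ (show 0 < (q+1)^2 by positivity)
      · calc (q+1)^2 * 16^(q+1) = 16 * (q+1)^2 * 16^q := by ring
          _ ≤ 16 * (q+1)^2 * (4 * q * (Nat.centralBinom q)^2) := by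
              exact Nat.mul_le_mul_left _ ih'
          _ ≤ 16 * ((2*q+1)^2 * (q+1)) * (Nat.centralBinom q)^2 := by
              have h1 : (q+1)^2 * (4*q) ≤ (2*q+1)^2 * (q+1) := by nlinarith
              calc 16 * (q+1)^2 * (4 * q * (Nat.centralBinom q)^2)
                  = 16 * ((q+1)^2 * (4*q)) * (Nat.centralBinom q)^2 := by ring
                _ ≤ 16 * ((2*q+1)^2 * (q+1)) * (Nat.centralBinom q)^2 := by
                    exact Nat.mul_le_mul_right _ (Nat.mul_le_mul_left _ h1)
          _ = (q+1) * (4 * (2*(2*q+1)*Nat.centralBinom q)^2) := by ring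
          _ = (q+1) * (4 * ((q+1) * Nat.centralBinom (q+1))^2) := by rw [key]
          _ = (q+1)^2 * (4 * (q+1) * (Nat.centralBinom (q+1))^2) := by ring


lemma SA_zero : SA 0 = 0 := by
  simp [SA]

lemma SA_nonneg (c : ℕ) : 0 ≤ SA c := by
  apply Finset.sum_nonneg; intro f _; positivity

lemma cb_real (q : ℕ) (hq : 1 ≤ q) :
    (4:ℝ)^q ≤ 2 * Real.sqrt q * (Nat.centralBinom q : ℝ) := by
  have h := cb_bound q hq
  have hcast : (16:ℝ)^q ≤ 4 * q * (Nat.centralBinom q : ℝ)^2 := by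
    exact_mod_cast h
  have hsq : ((4:ℝ)^q)^2 ≤ (2 * Real.sqrt q * (Nat.centralBinom q : ℝ))^2 := by
    have hq' : (Real.sqrt q)^2 = (q:ℝ) := Real.sq_sqrt (by positivity)
    calc ((4:ℝ)^q)^2 = (16:ℝ)^q := by
          rw [← pow_mul, pow_mul']
          norm_num
      _ ≤ 4 * q * (Nat.centralBinom q : ℝ)^2 := hcast
      _ = (2 * Real.sqrt q * (Nat.centralBinom q : ℝ))^2 := by
          rw [mul_pow, mul_pow, hq']
          ring
  have h1 : (0:ℝ) ≤ (4:ℝ)^q := by positivity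
  have h2 : (0:ℝ) ≤ 2 * Real.sqrt q * (Nat.centralBinom q : ℝ) := by positivity
  nlinarith

lemma sqrt_succ_le (q : ℕ) (hq : 1 ≤ q) :
    Real.sqrt (q+1) - Real.sqrt q ≤ 1 / (2 * Real.sqrt q) := by
  have hq1 : (1:ℝ) ≤ Real.sqrt q := by
    rw [show (1:ℝ) = Real.sqrt 1 by simp]
    apply Real.sqrt_le_sqrt; exact_mod_cast hq
  have hs : (Real.sqrt q)^2 = (q:ℝ) := Real.sq_sqrt (by positivity)
  have key : Real.sqrt (q+1) ≤ Real.sqrt q + 1/(2*Real.sqrt q) := by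
    have h2 : ((q:ℝ)+1) ≤ (Real.sqrt q + 1/(2*Real.sqrt q))^2 := by
      have hpos : (0:ℝ) < Real.sqrt q := by linarith
      have ht : 2 * Real.sqrt q * (1/(2*Real.sqrt q)) = 1 := by field_simp
      nlinarith [sq_nonneg (1/(2*Real.sqrt q)), hs, ht]
    calc Real.sqrt ((q:ℝ)+1) ≤ Real.sqrt ((Real.sqrt q + 1/(2*Real.sqrt q))^2) :=
          Real.sqrt_le_sqrt h2
      _ = Real.sqrt q + 1/(2*Real.sqrt q) := Real.sqrt_sq (by positivity)
  linarith

lemma szarek (c : ℕ) : (2:ℝ)^c * Real.sqrt (((c+1)/2 : ℕ) : ℝ) ≤ (SA c : ℝ) := by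
  induction c with
  | zero => simp [SA_zero]
  | succ c ih =>
    have hrec : (SA (c+1) : ℝ) = 2 * (SA c : ℝ) + 2 * (ZC c : ℝ) := by
      rw [SA_succ]; push_cast; ring
    rw [hrec]
    rcases Nat.even_or_odd c with ⟨q, hq⟩ | ⟨q, hq⟩
    · -- c = 2q even
      subst hq
      have hZC : (ZC (q+q) : ℝ) = (Nat.centralBinom q : ℝ) := by
        rw [ZC_eq]
        rw [if_pos ⟨q, by ring⟩]
        norm_num [Nat.centralBinom, two_mul]
        congr 1
        omega
      have hdiv1 : ((q+q+1)/2 : ℕ) = q := by omega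
      have hdiv2 : ((q+q+1+1)/2 : ℕ) = q+1 := by omega
      rw [hdiv2, hZC]
      rw [hdiv1] at ih
      by_cases hq0 : q = 0
      · subst hq0
        have hcb0 : Nat.centralBinom 0 = 1 := rfl
        have hSA : (SA (0+0) : ℝ) = 0 := by norm_num [SA_zero]
        norm_num [hcb0, hSA, Real.sqrt_one]
      · have hq1 : 1 ≤ q := by omega
        have hcb := cb_real q hq1
        have hsq := sqrt_succ_le q hq1
        have hsqrtq : (0:ℝ) < Real.sqrt q := by
          apply Real.sqrt_pos.mpr; exact_mod_cast hq1
        have hpow : (2:ℝ)^(q+q) = (4:ℝ)^q := by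
          rw [show q+q = 2*q by ring, pow_mul]
          norm_num
        -- goal : 2^(q+q+1) * sqrt (q+1) ≤ 2 * SA (q+q) + 2 * centralBinom q
        have key : (2:ℝ)^(q+q) * (Real.sqrt ((q:ℝ)+1) - Real.sqrt q) ≤ (Nat.centralBinom q : ℝ) := by
          calc (2:ℝ)^(q+q) * (Real.sqrt ((q:ℝ)+1) - Real.sqrt q)
              ≤ (4:ℝ)^q * (1/(2*Real.sqrt q)) := by
                rw [hpow]
                apply mul_le_mul_of_nonneg_left _ (by positivity)
                exact hsq
            _ ≤ (Nat.centralBinom q : ℝ) := by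
                rw [mul_one_div, div_le_iff₀ (by positivity)]
                nlinarith [hcb]
        have hcast1 : (((q:ℕ)+1 : ℕ) : ℝ) = (q:ℝ)+1 := by push_cast; ring
        rw [hcast1]
        have goal2 : (2:ℝ)^(q+q+1) * Real.sqrt ((q:ℝ)+1)
            = 2 * ((2:ℝ)^(q+q) * Real.sqrt q) + 2 * ((2:ℝ)^(q+q) * (Real.sqrt ((q:ℝ)+1) - Real.sqrt q)) := by
          ring
        rw [goal2]
        have ihq : (2:ℝ)^(q+q) * Real.sqrt q ≤ (SA (q+q) : ℝ) := by
          have : ((q:ℕ):ℝ) = (q:ℝ) := rfl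
          exact_mod_cast ih
        nlinarith
    · -- c = 2q+1 odd
      subst hq
      have hdiv : ((2*q+1+1+1)/2 : ℕ) = ((2*q+1+1)/2 : ℕ) := by omega
      rw [hdiv]
      have hZ := ZC_nonneg (2*q+1)
      have hZ' : (0:ℝ) ≤ (ZC (2*q+1) : ℝ) := by exact_mod_cast hZ
      have h2 : (2:ℝ)^(2*q+1+1) * Real.sqrt (((2*q+1+1)/2 : ℕ) : ℝ)
          = 2 * ((2:ℝ)^(2*q+1) * Real.sqrt (((2*q+1+1)/2 : ℕ) : ℝ)) := by ring
      rw [h2]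
      nlinarith [ih]


def splitAt {ι κ : Type*} [DecidableEq ι] (j : ι) : (ι → κ) ≃ κ × ({i : ι // i ≠ j} → κ) where
  toFun w := (w j, fun i => w i.1)
  invFun p i := if h : i = j then p.1 else p.2 ⟨i, h⟩
  left_inv w := by
    funext i
    by_cases h : i = j
    · subst h; simp
    · simp [h]
  right_inv p := by
    refine Prod.ext ?_ ?_
    · simp
    · funext i
      simp [i.prop]

lemma sum_eval {ι κ : Type*} [Fintype ι] [DecidableEq ι] [Fintype κ] [DecidableEq κ]
    (j : ι) (F : κ → ℤ) :
    ∑ w : ι → κ, F (w j) = (Fintype.card κ ^ (Fintype.card ι - 1) : ℤ) * ∑ x : κ, F x := by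
  rw [← Equiv.sum_comp (splitAt (κ := κ) j).symm (fun w => F (w j))]
  have hev : ∀ p : κ × ({i : ι // i ≠ j} → κ), ((splitAt j).symm p) j = p.1 := by
    intro p; simp [splitAt]
  rw [Fintype.sum_congr _ _ (fun p => by rw [hev p])]
  rw [Fintype.sum_prod_type]
  have hconst : ∀ x : κ, ∑ _r : {i : ι // i ≠ j} → κ, F x
      = (Fintype.card ({i : ι // i ≠ j} → κ) : ℤ) * F x := by
    intro x
    rw [Finset.sum_const, Finset.card_univ, nsmul_eq_mul]
  rw [Fintype.sum_congr _ _ hconst, ← Finset.mul_sum]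
  have hcard : Fintype.card {i : ι // i ≠ j} = Fintype.card ι - 1 := by
    have h1 : Fintype.card {i : ι // ¬ (i = j)} = Fintype.card ι - Fintype.card {i : ι // i = j} :=
      Fintype.card_subtype_compl _
    rw [Fintype.card_subtype_eq] at h1
    exact h1
  rw [Fintype.card_fun, hcard]
  push_cast
  ring


def sZ (k n : ℕ) (b : Fin (n * 2^k) → Bool) (j : Fin (2^k)) : ℤ :=
  ∑ l : Fin n, zsgn (b (finProdFinEquiv (l, j)))

def currySwap (k n : ℕ) : (Fin (2^k) → (Fin n → Bool)) ≃ (Fin n × Fin (2^k) → Bool) where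
  toFun w := fun p => w p.2 p.1
  invFun c := fun jj l => c (l, jj)
  left_inv w := rfl
  right_inv c := rfl

lemma TS_eq (k n : ℕ) (j : Fin (2^k)) :
    ∑ b : Fin (n * 2^k) → Bool, |sZ k n b j|
      = ((2:ℤ)^n)^(2^k - 1) * SA n := by
  rw [← Equiv.sum_comp (Equiv.arrowCongr finProdFinEquiv (Equiv.refl Bool))
    (fun b => |sZ k n b j|)]
  have h1 : ∀ c : Fin n × Fin (2^k) → Bool,
      sZ k n ((Equiv.arrowCongr finProdFinEquiv (Equiv.refl Bool)) c) j
        = ∑ l : Fin n, zsgn (c (l, j)) := by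
    intro c
    unfold sZ
    apply Finset.sum_congr rfl
    intro l _
    congr 1
    simp [Equiv.arrowCongr]
  rw [Fintype.sum_congr _ _ (fun c => by rw [h1 c])]
  rw [← Equiv.sum_comp (currySwap k n) (fun c => |∑ l : Fin n, zsgn (c (l, j))|)]
  have h2 : ∀ w : Fin (2^k) → (Fin n → Bool),
      |∑ l : Fin n, zsgn ((currySwap k n) w (l, j))| = |∑ l : Fin n, zsgn (w j l)| := by
    intro w; rfl
  rw [Fintype.sum_congr _ _ h2]
  rw [sum_eval j (fun col : Fin n → Bool => |∑ l, zsgn (col l)|)]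
  rw [← SA]
  congr 1
  rw [Fintype.card_fun, Fintype.card_bool, Fintype.card_fin, Fintype.card_fin]
  push_cast
  ring


def EB (k : ℕ) : (Fin k → Bool) ≃ Fin (2 ^ k) :=
  (Equiv.arrowCongr (Equiv.refl (Fin k)) finTwoEquiv).symm.trans finFunctionFinEquiv

def Had (k : ℕ) (a j : Fin (2 ^ k)) : ℝ :=
  ∏ i : Fin k, if ((EB k).symm a i && (EB k).symm j i) then (-1 : ℝ) else 1

lemma Had_pm (k : ℕ) (a j : Fin (2^k)) : Had k a j = 1 ∨ Had k a j = -1 := by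
  unfold Had
  apply Finset.prod_induction _ (fun t => t = 1 ∨ t = -1)
  · rintro x y (hx | hx) (hy | hy) <;> rw [hx, hy] <;> norm_num
  · left; rfl
  · intro i _
    split <;> simp

lemma Had_mul_self (k : ℕ) (a j : Fin (2^k)) : Had k a j * Had k a j = 1 := by
  rcases Had_pm k a j with h | h <;> rw [h] <;> norm_num

def bflip (k : ℕ) (i0 : Fin k) : (Fin k → Bool) ≃ (Fin k → Bool) :=
  Function.Involutive.toPerm
    (fun f => Function.update f i0 (!f i0))
    (by
      intro f
      funext i
      by_cases h : i = i0
      · subst h; simp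
      · simp [Function.update_of_ne h])

def hflip (k : ℕ) (i0 : Fin k) : Fin (2^k) ≃ Fin (2^k) :=
  ((EB k).symm.trans (bflip k i0)).trans (EB k)

lemma Had_flip (k : ℕ) (i0 : Fin k) (a j : Fin (2^k)) :
    Had k (hflip k i0 a) j = (if (EB k).symm j i0 then (-1:ℝ) else 1) * Had k a j := by
  unfold Had
  have hb : (EB k).symm (hflip k i0 a)
      = Function.update ((EB k).symm a) i0 (!((EB k).symm a i0)) := by
    unfold hflip
    simp [bflip, Function.Involutive.toPerm]
  rw [hb]
  rw [← Finset.prod_erase_mul _ _ (Finset.mem_univ i0),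
      ← Finset.prod_erase_mul _ _ (Finset.mem_univ i0)]
  have herase : ∀ i ∈ Finset.univ.erase i0,
      (if (Function.update ((EB k).symm a) i0 (!((EB k).symm a i0)) i && (EB k).symm j i)
        then (-1:ℝ) else 1)
      = (if ((EB k).symm a i && (EB k).symm j i) then (-1:ℝ) else 1) := by
    intro i hi
    rw [Function.update_of_ne (Finset.ne_of_mem_erase hi)]
  rw [Finset.prod_congr rfl herase]
  have hfac : (if (Function.update ((EB k).symm a) i0 (!((EB k).symm a i0)) i0 && (EB k).symm j i0)
        then (-1:ℝ) else 1)
      = (if (EB k).symm j i0 then (-1:ℝ) else 1)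
        * (if ((EB k).symm a i0 && (EB k).symm j i0) then (-1:ℝ) else 1) := by
    rw [Function.update_self]
    cases hu : (EB k).symm j i0 <;> cases hv : (EB k).symm a i0 <;> norm_num
  rw [hfac]
  ring

lemma Had_orth (k : ℕ) {j j' : Fin (2^k)} (hjj : j ≠ j') :
    ∑ a, Had k a j * Had k a j' = 0 := by
  have hne : (EB k).symm j ≠ (EB k).symm j' := fun h => hjj ((EB k).symm.injective h)
  obtain ⟨i0, hi0⟩ := Function.ne_iff.mp hne
  have hsum := Equiv.sum_comp (hflip k i0) (fun a => Had k a j * Had k a j')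
  have hneg : ∀ a, Had k (hflip k i0 a) j * Had k (hflip k i0 a) j'
      = -(Had k a j * Had k a j') := by
    intro a
    rw [Had_flip, Had_flip]
    rcases Bool.eq_false_or_eq_true ((EB k).symm j i0) with h1 | h1 <;>
      rcases Bool.eq_false_or_eq_true ((EB k).symm j' i0) with h2 | h2 <;>
      rw [h1, h2] <;> first
        | (exfalso; rw [h1, h2] at hi0; exact hi0 rfl)
        | (norm_num; try ring)
  rw [Fintype.sum_congr _ _ hneg] at hsum
  rw [Finset.sum_neg_distrib] at hsum
  linarith

lemma Had_quad (k : ℕ) (w : Fin (2^k) → ℝ) :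
    ∑ a, (∑ j, Had k a j * w j)^2 = 2^k * ∑ j, (w j)^2 := by
  have expand : ∀ a, (∑ j, Had k a j * w j)^2
      = ∑ j, ∑ j', (w j * w j') * (Had k a j * Had k a j') := by
    intro a
    rw [sq, Finset.sum_mul_sum]
    apply Finset.sum_congr rfl; intro j _
    apply Finset.sum_congr rfl; intro j' _
    ring
  rw [Fintype.sum_congr _ _ expand]
  rw [Finset.sum_comm]
  have inner : ∀ j, ∑ a, ∑ j', (w j * w j') * (Had k a j * Had k a j')
      = 2^k * (w j)^2 := by
    intro j
    rw [Finset.sum_comm]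
    have hsplit : ∀ j', ∑ a, (w j * w j') * (Had k a j * Had k a j')
        = (w j * w j') * ∑ a, (Had k a j * Had k a j') := by
      intro j'; rw [Finset.mul_sum]
    rw [Fintype.sum_congr _ _ hsplit]
    rw [Finset.sum_eq_single j]
    · rw [Finset.sum_congr rfl (fun a _ => Had_mul_self k a j)]
      rw [Finset.sum_const, Finset.card_univ, Fintype.card_fin, nsmul_eq_mul]
      push_cast; ring
    · intro j' _ hne
      rw [Had_orth k (Ne.symm hne), mul_zero]
    · intro h; exact absurd (Finset.mem_univ j) h
  rw [Fintype.sum_congr _ _ inner, ← Finset.mul_sum]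


def grp (k n : ℕ) (i : Fin (n * 2^k)) : Fin (2^k) := (finProdFinEquiv.symm i).2

lemma single_inj {k : ℕ} (j j' : Fin (2^k)) :
    (Pi.single j 1 : Fin (2^k) → ℝ) = Pi.single j' 1 ↔ j = j' := by
  constructor
  · intro h
    by_contra hne
    have := congrFun h j
    rw [Pi.single_eq_same, Pi.single_eq_of_ne hne] at this
    exact one_ne_zero (α := ℝ) this
  · rintro rfl; rfl

lemma grp_card (k n : ℕ) (j : Fin (2^k)) :
    (Finset.univ.filter fun i => grp k n i = j).card = n := by
  rw [Finset.card_bij' (fun i _ => (finProdFinEquiv.symm i).1)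
    (fun l _ => finProdFinEquiv (l, j))
    (fun i hi => Finset.mem_univ _)
    (fun l hl => by
      rw [Finset.mem_filter]
      exact ⟨Finset.mem_univ _, by simp only [grp, Equiv.symm_apply_apply]⟩)
    (fun i hi => by
      replace hi := (Finset.mem_filter.mp hi).2; simp only [grp] at hi
      show finProdFinEquiv ((finProdFinEquiv.symm i).1, j) = i
      have hpair : ((finProdFinEquiv.symm i).1, j) = finProdFinEquiv.symm i := by
        rw [← hi]
      rw [hpair, Equiv.apply_symm_apply])
    (fun l hl => by simp)]
  rw [Finset.card_univ, Fintype.card_fin]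

lemma netS_single {k : ℕ} (V : Fin (2^k) → ℝ) (U : Matrix (Fin (2^k)) (Fin (2^k)) ℝ)
    (j : Fin (2^k)) :
    netS V U (Pi.single j 1) = ∑ a, V a * relu (U a j) := by
  unfold netS
  apply Finset.sum_congr rfl
  intro a _
  congr 2
  rw [Finset.sum_eq_single j]
  · rw [Pi.single_eq_same, mul_one]
  · intro c _ hc
    rw [Pi.single_eq_of_ne hc, mul_zero]
  · intro h; exact absurd (Finset.mem_univ j) h

lemma group_sum (k n : ℕ) (b : Fin (n * 2^k) → Bool) (G : Fin (2^k) → ℝ) :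
    ∑ i, sg (b i) * G (grp k n i) = ∑ j, ((sZ k n b j : ℤ) : ℝ) * G j := by
  rw [← Equiv.sum_comp finProdFinEquiv (fun i => sg (b i) * G (grp k n i))]
  have h1 : ∀ p : Fin n × Fin (2^k),
      sg (b (finProdFinEquiv p)) * G (grp k n (finProdFinEquiv p))
        = sg (b (finProdFinEquiv p)) * G p.2 := by
    intro p
    congr 2
    unfold grp
    rw [Equiv.symm_apply_apply]
  rw [Fintype.sum_congr _ _ h1]
  rw [Fintype.sum_prod_type, Finset.sum_comm]
  apply Finset.sum_congr rfl
  intro j _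
  rw [show (∑ x : Fin n, sg (b (finProdFinEquiv (x, j))) * G (x, j).2)
      = ∑ x : Fin n, sg (b (finProdFinEquiv (x, j))) * G j from rfl]
  rw [← Finset.sum_mul]
  congr 1
  unfold sZ
  push_cast
  apply Finset.sum_congr rfl
  intro l _
  exact sg_eq_zsgn _


lemma choice (k n : ℕ) (b : Fin (n*2^k) → Bool) (a : Fin (2^k)) :
    ∃ σ : ℤ, ∃ τ : ℝ, (σ = 1 ∨ σ = -1) ∧ (τ = 1 ∨ τ = -1) ∧
      (∑ j, ((|sZ k n b j| : ℤ) : ℝ)) / 4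
        ≤ ∑ j, (if 0 < σ * sZ k n b j ∧ Had k a j = τ
            then ((|sZ k n b j| : ℤ) : ℝ) else 0) := by
  classical
  set C : ℤ → ℝ → ℝ := fun σ τ => ∑ j, (if 0 < σ * sZ k n b j ∧ Had k a j = τ
      then ((|sZ k n b j| : ℤ) : ℝ) else 0) with hC
  set T : ℝ := ∑ j, ((|sZ k n b j| : ℤ) : ℝ) with hT
  have hsum : C 1 1 + C 1 (-1) + C (-1) 1 + C (-1) (-1) = T := by
    rw [hC, hT]
    simp only
    rw [← Finset.sum_add_distrib, ← Finset.sum_add_distrib, ← Finset.sum_add_distrib]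
    apply Finset.sum_congr rfl
    intro j _
    set s := sZ k n b j with hs_def
    rcases Had_pm k a j with h | h
    · rw [h]
      rw [if_neg (fun hc => by norm_num at hc : ¬(0 < (1:ℤ) * s ∧ (1:ℝ) = -1)),
          if_neg (fun hc => by norm_num at hc : ¬(0 < (-1:ℤ) * s ∧ (1:ℝ) = -1))]
      rw [if_congr (show (0 < (1:ℤ) * s ∧ (1:ℝ) = 1) ↔ 0 < s by
            constructor
            · rintro ⟨h1, -⟩; omega
            · intro h1; exact ⟨by omega, rfl⟩) rfl rfl,
          if_congr (show (0 < (-1:ℤ) * s ∧ (1:ℝ) = 1) ↔ s < 0 by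
            constructor
            · rintro ⟨h1, -⟩; omega
            · intro h1; exact ⟨by omega, rfl⟩) rfl rfl]
      rcases lt_trichotomy s 0 with hs | hs | hs
      · rw [if_neg (by omega), if_pos hs]; push_cast [abs_of_neg hs]; ring
      · rw [if_neg (by omega), if_neg (by omega)]; rw [hs]; norm_num
      · rw [if_pos hs, if_neg (by omega)]; push_cast [abs_of_pos hs]; ring
    · rw [h]
      rw [if_neg (fun hc => by norm_num at hc : ¬(0 < (1:ℤ) * s ∧ (-1:ℝ) = 1)),
          if_neg (fun hc => by norm_num at hc : ¬(0 < (-1:ℤ) * s ∧ (-1:ℝ) = 1))]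
      rw [if_congr (show (0 < (1:ℤ) * s ∧ (-1:ℝ) = -1) ↔ 0 < s by
            constructor
            · rintro ⟨h1, -⟩; omega
            · intro h1; exact ⟨by omega, rfl⟩) rfl rfl,
          if_congr (show (0 < (-1:ℤ) * s ∧ (-1:ℝ) = -1) ↔ s < 0 by
            constructor
            · rintro ⟨h1, -⟩; omega
            · intro h1; exact ⟨by omega, rfl⟩) rfl rfl]
      rcases lt_trichotomy s 0 with hs | hs | hs
      · rw [if_neg (by omega), if_pos hs]; push_cast [abs_of_neg hs]; ring
      · rw [if_neg (by omega), if_neg (by omega)]; rw [hs]; norm_num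
      · rw [if_pos hs, if_neg (by omega)]; push_cast [abs_of_pos hs]; ring
  rcases le_or_gt (T/4) (C 1 1) with h | h1
  · exact ⟨1, 1, Or.inl rfl, Or.inl rfl, h⟩
  rcases le_or_gt (T/4) (C 1 (-1)) with h | h2
  · exact ⟨1, -1, Or.inl rfl, Or.inr rfl, h⟩
  rcases le_or_gt (T/4) (C (-1) 1) with h | h3
  · exact ⟨-1, 1, Or.inr rfl, Or.inl rfl, h⟩
  rcases le_or_gt (T/4) (C (-1) (-1)) with h | h4
  · exact ⟨-1, -1, Or.inr rfl, Or.inr rfl, h⟩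
  exfalso
  linarith


lemma perb (k n : ℕ) (α β : Fin (2^k) → ℝ) (hα : ∀ j, 0 ≤ α j) (hβ : ∀ j, 0 ≤ β j)
    (b : Fin (n*2^k) → Bool) :
    (∑ j, α j * β j) * (∑ j, ((|sZ k n b j| : ℤ):ℝ)) / (4 * Real.sqrt (2^k))
      ≤ ⨆ p : {q : (Fin (2 ^ k) → ℝ) × Matrix (Fin (2 ^ k)) (Fin (2 ^ k)) ℝ //
          (∀ j, |q.1 j| ≤ α j) ∧ (∀ j, euclNorm (q.2 j) ≤ β j) ∧
          specNorm q.2 ≤ ⨆ j, β j},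
        ∑ i, sg (b i) * netS p.val.1 p.val.2 (Pi.single (grp k n i) 1) := by
  classical
  choose σf τf hσ hτ hval using fun a => choice k n b a
  set D : ℝ := Real.sqrt (2^k) with hD_def
  have hD : 0 < D := Real.sqrt_pos.mpr (by positivity)
  have hD2 : D^2 = 2^k := Real.sq_sqrt (by positivity)
  set T : ℝ := ∑ j, ((|sZ k n b j| : ℤ):ℝ) with hT_def
  set V : Fin (2^k) → ℝ := fun a => (σf a : ℝ) * α a with hV_def
  set U : Matrix (Fin (2^k)) (Fin (2^k)) ℝ :=
    fun a j => β a * τf a * Had k a j * (if 0 < σf a * sZ k n b j then (1:ℝ) else 0) / D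
    with hU_def
  have hUentry : ∀ a j, U a j
      = β a * τf a * Had k a j * (if 0 < σf a * sZ k n b j then (1:ℝ) else 0) / D := by
    intro a j; rw [hU_def]
  have hgsq : ∀ (P : Prop) [Decidable P], ((if P then (1:ℝ) else 0))^2 ≤ 1 := by
    intro P _; split <;> norm_num
  have hτ2 : ∀ a, (τf a)^2 = 1 := by
    intro a; rcases hτ a with h | h <;> rw [h] <;> norm_num
  have hH2 : ∀ a j, (Had k a j)^2 = 1 := by
    intro a j; rw [sq, Had_mul_self]
  -- row norms
  have hRow : ∀ a, euclNorm (U a) ≤ β a := by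
    intro a
    have hsum : ∑ j, (U a j)^2 ≤ (β a)^2 := by
      have hj : ∀ j : Fin (2^k), (U a j)^2 ≤ (β a)^2 / (2^k) := by
        intro j
        have he : (U a j)^2 = (β a)^2 * ((τf a)^2) * ((Had k a j)^2)
            * ((if 0 < σf a * sZ k n b j then (1:ℝ) else 0))^2 / D^2 := by
          rw [hUentry]; ring
        rw [he, hτ2, hH2, hD2]
        have hg := hgsq (0 < σf a * sZ k n b j)
        gcongr
        nlinarith [sq_nonneg (β a)]
      calc ∑ j, (U a j)^2 ≤ ∑ _j : Fin (2^k), (β a)^2 / (2^k) :=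
            Finset.sum_le_sum (fun j _ => hj j)
        _ = (β a)^2 := by
            rw [Finset.sum_const, Finset.card_univ, Fintype.card_fin, nsmul_eq_mul]
            field_simp
            push_cast; ring
    calc euclNorm (U a) ≤ Real.sqrt ((β a)^2) := Real.sqrt_le_sqrt hsum
      _ = β a := Real.sqrt_sq (hβ a)
  -- V constraint
  have hVc : ∀ j, |V j| ≤ α j := by
    intro j
    simp only [hV_def]
    rcases hσ j with h | h <;> rw [h] <;> push_cast <;>
      simp [abs_of_nonneg (hα j)]
  -- spectral norm
  set B : ℝ := ⨆ j, β j with hB_def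
  have hBa : ∀ a, β a ≤ B := by
    intro a
    exact le_ciSup (Set.Finite.bddAbove (Set.finite_range β)) a
  have hB0 : 0 ≤ B := le_trans (hβ ⟨0, by positivity⟩) (hBa _)
  have hSpec : specNorm U ≤ B := by
    haveI : Nonempty {v : Fin (2^k) → ℝ // euclNorm v ≤ 1} := by
      refine ⟨⟨fun _ => 0, ?_⟩⟩
      unfold euclNorm
      simp
    apply ciSup_le
    rintro ⟨v, hv⟩
    have hv2 : ∑ j, (v j)^2 ≤ 1 := by
      have h1 : ∑ j, (v j)^2 = (euclNorm v)^2 :=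
        (Real.sq_sqrt (by positivity)).symm
      have h0 : 0 ≤ euclNorm v := Real.sqrt_nonneg _
      nlinarith
    set wP : Fin (2^k) → ℝ := fun j => (if 0 < sZ k n b j then (1:ℝ) else 0) * v j with hwP
    set wN : Fin (2^k) → ℝ := fun j => (if sZ k n b j < 0 then (1:ℝ) else 0) * v j with hwN
    have hmv : ∀ a, (U.mulVec v a)^2
        ≤ (B^2/2^k) * ((∑ j, Had k a j * wP j)^2 + (∑ j, Had k a j * wN j)^2) := by
      intro a
      have hmv1 : U.mulVec v a = (β a * τf a / D)
          * ∑ j, Had k a j * ((if 0 < σf a * sZ k n b j then (1:ℝ) else 0) * v j) := by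
        unfold Matrix.mulVec dotProduct
        rw [Finset.mul_sum]
        apply Finset.sum_congr rfl
        intro j _
        simp only [hUentry]
        ring
      have e1 : (β a * τf a / D)^2 = (β a)^2/(2^k) := by
        rw [div_pow, mul_pow, hτ2 a, hD2, mul_one]
      have hβB : (β a)^2 ≤ B^2 := by nlinarith [hβ a, hBa a]
      have h2k : (0:ℝ) < 2^k := by positivity
      rcases hσ a with h | h
      · have hrw : ∑ j, Had k a j * ((if 0 < σf a * sZ k n b j then (1:ℝ) else 0) * v j)
            = ∑ j, Had k a j * wP j := by
          apply Finset.sum_congr rfl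
          intro j _
          rw [h]
          have hcond : (0 < (1:ℤ) * sZ k n b j) = (0 < sZ k n b j) := by
            apply propext; constructor <;> intro <;> omega
          simp only [hcond, hwP]
        rw [hmv1, mul_pow, e1, hrw]
        have hsqP : 0 ≤ (∑ j, Had k a j * wP j)^2 := sq_nonneg _
        have hsqN : 0 ≤ (∑ j, Had k a j * wN j)^2 := sq_nonneg _
        have hc : (β a)^2/(2^k) ≤ B^2/(2^k) := by gcongr
        nlinarith
      · have hrw : ∑ j, Had k a j * ((if 0 < σf a * sZ k n b j then (1:ℝ) else 0) * v j)
            = ∑ j, Had k a j * wN j := by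
          apply Finset.sum_congr rfl
          intro j _
          rw [h]
          have hcond : (0 < (-1:ℤ) * sZ k n b j) = (sZ k n b j < 0) := by
            apply propext; constructor <;> intro <;> omega
          simp only [hcond, hwN]
        rw [hmv1, mul_pow, e1, hrw]
        have hsqP : 0 ≤ (∑ j, Had k a j * wP j)^2 := sq_nonneg _
        have hsqN : 0 ≤ (∑ j, Had k a j * wN j)^2 := sq_nonneg _
        have hc : (β a)^2/(2^k) ≤ B^2/(2^k) := by gcongr
        nlinarith
    have hsum2 : ∑ a, (U.mulVec v a)^2 ≤ B^2 := by
      have step1 : ∑ a, (U.mulVec v a)^2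
          ≤ ∑ a, (B^2/2^k) * ((∑ j, Had k a j * wP j)^2 + (∑ j, Had k a j * wN j)^2) :=
        Finset.sum_le_sum (fun a _ => hmv a)
      have step2 : ∑ a, (B^2/2^k) * ((∑ j, Had k a j * wP j)^2 + (∑ j, Had k a j * wN j)^2)
          = (B^2/2^k) * (∑ a, (∑ j, Had k a j * wP j)^2 + ∑ a, (∑ j, Had k a j * wN j)^2) := by
        rw [← Finset.sum_add_distrib, Finset.mul_sum]
      have step3 : (∑ a, (∑ j, Had k a j * wP j)^2) = 2^k * ∑ j, (wP j)^2 := Had_quad k wP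
      have step4 : (∑ a, (∑ j, Had k a j * wN j)^2) = 2^k * ∑ j, (wN j)^2 := Had_quad k wN
      have step5 : ∑ j, ((wP j)^2 + (wN j)^2) ≤ ∑ j, (v j)^2 := by
        apply Finset.sum_le_sum
        intro j _
        simp only [hwP, hwN]
        rcases lt_trichotomy (sZ k n b j) 0 with hs | hs | hs
        · rw [if_neg (by omega), if_pos hs]
          norm_num [sq_nonneg (v j)]
        · rw [if_neg (by omega), if_neg (by omega)]
          norm_num [sq_nonneg (v j)]
        · rw [if_pos hs, if_neg (by omega)]
          norm_num [sq_nonneg (v j)]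
      have h2k : (0:ℝ) < 2^k := by positivity
      calc ∑ a, (U.mulVec v a)^2
          ≤ (B^2/2^k) * (2^k * ∑ j, (wP j)^2 + 2^k * ∑ j, (wN j)^2) := by
            rw [← step3, ← step4]
            exact le_trans step1 (le_of_eq step2)
        _ = B^2 * (∑ j, ((wP j)^2 + (wN j)^2)) := by
            rw [Finset.sum_add_distrib]
            field_simp
        _ ≤ B^2 * ∑ j, (v j)^2 := by
            apply mul_le_mul_of_nonneg_left step5 (by positivity)
        _ ≤ B^2 * 1 := by
            apply mul_le_mul_of_nonneg_left hv2 (by positivity)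
        _ = B^2 := mul_one _
    calc euclNorm (U.mulVec v) ≤ Real.sqrt (B^2) := Real.sqrt_le_sqrt hsum2
      _ = B := Real.sqrt_sq hB0
  -- value computation
  have hterm : ∀ a j, ((sZ k n b j : ℤ):ℝ) * (V a * relu (U a j))
      = α a * ((β a / D) * (if 0 < σf a * sZ k n b j ∧ Had k a j = τf a
          then ((|sZ k n b j| : ℤ):ℝ) else 0)) := by
    intro a j
    by_cases hg : 0 < σf a * sZ k n b j
    · have hUj : U a j = β a * τf a * Had k a j / D := by
        rw [hUentry, if_pos hg, mul_one]
      have hσs : ((σf a : ℤ):ℝ) * ((sZ k n b j : ℤ):ℝ) = ((|sZ k n b j| : ℤ):ℝ) := by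
        rcases hσ a with h | h
        · rw [h] at hg ⊢
          rw [one_mul] at hg
          push_cast [abs_of_pos hg]
          norm_num
        · rw [h] at hg ⊢
          have hsneg : sZ k n b j < 0 := by omega
          push_cast [abs_of_neg hsneg]
          ring
      rcases Had_pm k a j with hH | hH <;> rcases hτ a with ht | ht
      · -- Had = 1, τ = 1 : relu = β/D, cond true
        rw [hUj, hH, ht, if_pos ⟨hg, rfl⟩]
        have : β a * 1 * 1 / D = β a / D := by ring
        rw [this]
        have hr : relu (β a / D) = β a / D := by
          unfold relu
          exact max_eq_left (div_nonneg (hβ a) hD.le)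
        rw [hr]
        simp only [hV_def]
        linear_combination (α a * (β a / D)) * hσs
      · -- Had = 1, τ = -1 : relu (−β/D) = 0, cond false
        rw [hUj, hH, ht, if_neg (by
          rintro ⟨-, hcon⟩
          norm_num at hcon)]
        have : β a * (-1) * 1 / D = -(β a / D) := by ring
        rw [this]
        have hr : relu (-(β a / D)) = 0 := by
          unfold relu
          exact max_eq_right (neg_nonpos.mpr (div_nonneg (hβ a) hD.le))
        rw [hr]
        ring
      · -- Had = -1, τ = 1 : relu(−β/D) = 0, cond false
        rw [hUj, hH, ht, if_neg (by
          rintro ⟨-, hcon⟩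
          norm_num at hcon)]
        have : β a * 1 * (-1) / D = -(β a / D) := by ring
        rw [this]
        have hr : relu (-(β a / D)) = 0 := by
          unfold relu
          exact max_eq_right (neg_nonpos.mpr (div_nonneg (hβ a) hD.le))
        rw [hr]
        ring
      · -- Had = -1, τ = -1 : relu = β/D, cond true
        rw [hUj, hH, ht, if_pos ⟨hg, rfl⟩]
        have : β a * (-1) * (-1) / D = β a / D := by ring
        rw [this]
        have hr : relu (β a / D) = β a / D := by
          unfold relu
          exact max_eq_left (div_nonneg (hβ a) hD.le)
        rw [hr]
        simp only [hV_def]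
        linear_combination (α a * (β a / D)) * hσs
    · have hUj : U a j = 0 := by
        rw [hUentry, if_neg hg]
        ring
      rw [hUj, if_neg (fun hcon => hg hcon.1)]
      have hr : relu 0 = 0 := by
        unfold relu
        norm_num
      rw [hr]
      ring
  have hvalue : ∑ i, sg (b i) * netS V U (Pi.single (grp k n i) 1)
      = ∑ a, α a * ((β a / D) * ∑ j, (if 0 < σf a * sZ k n b j ∧ Had k a j = τf a
          then ((|sZ k n b j| : ℤ):ℝ) else 0)) := by
    rw [group_sum k n b (fun j => netS V U (Pi.single j 1))]
    have h1 : ∀ j, ((sZ k n b j : ℤ):ℝ) * netS V U (Pi.single j 1)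
        = ∑ a, ((sZ k n b j : ℤ):ℝ) * (V a * relu (U a j)) := by
      intro j
      rw [netS_single, Finset.mul_sum]
    rw [Fintype.sum_congr _ _ h1, Finset.sum_comm]
    apply Finset.sum_congr rfl
    intro a _
    rw [Fintype.sum_congr _ _ (fun j => hterm a j), ← Finset.mul_sum, ← Finset.mul_sum]
  have hlow : (∑ j, α j * β j) * T / (4 * D)
      ≤ ∑ i, sg (b i) * netS V U (Pi.single (grp k n i) 1) := by
    rw [hvalue]
    have hbound : ∀ a, α a * ((β a / D) * (T/4))
        ≤ α a * ((β a / D) * ∑ j, (if 0 < σf a * sZ k n b j ∧ Had k a j = τf a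
            then ((|sZ k n b j| : ℤ):ℝ) else 0)) := by
      intro a
      apply mul_le_mul_of_nonneg_left _ (hα a)
      apply mul_le_mul_of_nonneg_left _ (div_nonneg (hβ a) hD.le)
      exact hval a
    calc (∑ j, α j * β j) * T / (4 * D)
        = ∑ a, α a * ((β a / D) * (T/4)) := by
          rw [Finset.sum_mul, Finset.sum_div]
          apply Finset.sum_congr rfl
          intro a _
          ring
      _ ≤ _ := Finset.sum_le_sum (fun a _ => hbound a)
  have hBdd : BddAbove (Set.range (fun p : {q : (Fin (2 ^ k) → ℝ) × Matrix (Fin (2 ^ k)) (Fin (2 ^ k)) ℝ //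
          (∀ j, |q.1 j| ≤ α j) ∧ (∀ j, euclNorm (q.2 j) ≤ β j) ∧
          specNorm q.2 ≤ ⨆ j, β j} =>
        ∑ i, sg (b i) * netS p.val.1 p.val.2 (Pi.single (grp k n i) 1))) := by
    refine ⟨(n * 2^k : ℝ) * ∑ j, α j * β j, ?_⟩
    rintro y ⟨p, rfl⟩
    obtain ⟨⟨Vp, Up⟩, hp1, hp2, hp3⟩ := p
    simp only
    have hper : ∀ i, sg (b i) * netS Vp Up (Pi.single (grp k n i) 1) ≤ ∑ j, α j * β j := by
      intro i
      have h1 : |netS Vp Up (Pi.single (grp k n i) 1)| ≤ ∑ j, α j * β j := by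
        rw [netS_single]
        calc |∑ a, Vp a * relu (Up a (grp k n i))|
            ≤ ∑ a, |Vp a * relu (Up a (grp k n i))| := Finset.abs_sum_le_sum_abs _ _
          _ ≤ ∑ a, α a * β a := by
              apply Finset.sum_le_sum
              intro a _
              rw [abs_mul]
              apply mul_le_mul (hp1 a) _ (abs_nonneg _) (hα a)
              calc |relu (Up a (grp k n i))| ≤ |Up a (grp k n i)| := by
                    unfold relu
                    rcases le_or_gt (Up a (grp k n i)) 0 with hle | hlt
                    · rw [max_eq_right hle]
                      simp [abs_nonneg]
                    · rw [max_eq_left hlt.le, abs_of_pos hlt]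
                _ ≤ euclNorm (Up a) := by
                    unfold euclNorm
                    rw [← Real.sqrt_sq_eq_abs]
                    apply Real.sqrt_le_sqrt
                    exact Finset.single_le_sum (f := fun c => (Up a c)^2)
                      (fun c _ => sq_nonneg _) (Finset.mem_univ _)
                _ ≤ β a := hp2 a
      have habs : |sg (b i)| = 1 := by
        cases b i <;> simp [sg]
      have h2 : sg (b i) * netS Vp Up (Pi.single (grp k n i) 1)
          ≤ |netS Vp Up (Pi.single (grp k n i) 1)| := by
        calc sg (b i) * netS Vp Up (Pi.single (grp k n i) 1)
            ≤ |sg (b i) * netS Vp Up (Pi.single (grp k n i) 1)| := le_abs_self _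
          _ = |sg (b i)| * |netS Vp Up (Pi.single (grp k n i) 1)| := abs_mul _ _
          _ = |netS Vp Up (Pi.single (grp k n i) 1)| := by rw [habs, one_mul]
      exact le_trans h2 h1
    calc ∑ i, sg (b i) * netS Vp Up (Pi.single (grp k n i) 1)
        ≤ ∑ _i : Fin (n * 2^k), ∑ j, α j * β j := Finset.sum_le_sum (fun i _ => hper i)
      _ = (n * 2^k : ℝ) * ∑ j, α j * β j := by
          rw [Finset.sum_const, Finset.card_univ, Fintype.card_fin, nsmul_eq_mul]
          push_cast
          ring
  have hwit := le_ciSup hBdd (⟨(V, U), hVc, hRow, hSpec⟩ :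
    {q : (Fin (2 ^ k) → ℝ) × Matrix (Fin (2 ^ k)) (Fin (2 ^ k)) ℝ //
          (∀ j, |q.1 j| ≤ α j) ∧ (∀ j, euclNorm (q.2 j) ≤ β j) ∧
          specNorm q.2 ≤ ⨆ j, β j})
  exact le_trans hlow hwit

end RadAux

open RadAux in
/-- Rademacher complexity lower bound for the restricted class `F_{W'}`
on a sample made of standard basis vectors, each repeated `n` times
(`d = h = 2^k`, `m = n·2^k`, `c = 1`, `U0 = 0`). -/
theorem rademacher_lower_bound_hadamard
    (k n : ℕ) (hk : 0 < k) (hn : 0 < n)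
    (α β : Fin (2 ^ k) → ℝ) (hα : ∀ j, 0 ≤ α j) (hβ : ∀ j, 0 ≤ β j) :
    ∃ x : Fin (n * 2 ^ k) → Fin (2 ^ k) → ℝ,
      (∀ i, ∃ j, x i = Pi.single j 1) ∧
      (∀ j : Fin (2 ^ k),
        (Finset.univ.filter fun i => x i = Pi.single j 1).card = n) ∧
      (∑ b : Fin (n * 2 ^ k) → Bool,
          ⨆ p : {q : (Fin (2 ^ k) → ℝ) × Matrix (Fin (2 ^ k)) (Fin (2 ^ k)) ℝ //
              (∀ j, |q.1 j| ≤ α j) ∧ (∀ j, euclNorm (q.2 j) ≤ β j) ∧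
              specNorm q.2 ≤ ⨆ j, β j},
            ∑ i, sg (b i) * netS p.val.1 p.val.2 (x i)) / 2 ^ (n * 2 ^ k)
        ≥ (∑ j, α j * β j) * Real.sqrt (2 * (n * 2 ^ k)) / 8 ∧
      (1 / (n * 2 ^ k) : ℝ) *
        ((∑ b : Fin (n * 2 ^ k) → Bool,
          ⨆ p : {q : (Fin (2 ^ k) → ℝ) × Matrix (Fin (2 ^ k)) (Fin (2 ^ k)) ℝ //
              (∀ j, |q.1 j| ≤ α j) ∧ (∀ j, euclNorm (q.2 j) ≤ β j) ∧
              specNorm q.2 ≤ ⨆ j, β j},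
            ∑ i, sg (b i) * netS p.val.1 p.val.2 (x i)) / 2 ^ (n * 2 ^ k))
        ≥ (∑ j, α j * β j) * Real.sqrt (2 * (n * 2 ^ k)) / (8 * (n * 2 ^ k)) := by

  classical
  refine ⟨fun i => Pi.single (grp k n i) 1, fun i => ⟨grp k n i, rfl⟩, ?_, ?_⟩
  · intro j
    have hfe : (Finset.univ.filter fun i => (Pi.single (grp k n i) 1 : Fin (2^k) → ℝ) = Pi.single j 1)
        = (Finset.univ.filter fun i => grp k n i = j) := by
      apply Finset.filter_congr
      intro i _
      exact single_inj _ _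
    rw [hfe, grp_card]
  -- main inequality
  have hm0 : (0:ℝ) < (n : ℝ) * 2^k := by positivity
  have hSm0 : 0 ≤ ∑ j, α j * β j :=
    Finset.sum_nonneg (fun j _ => mul_nonneg (hα j) (hβ j))
  set Sm : ℝ := ∑ j, α j * β j with hSm_def
  set D : ℝ := Real.sqrt (2^k) with hD_def
  have hD : 0 < D := Real.sqrt_pos.mpr (by positivity)
  set SS : ℝ := ∑ b : Fin (n * 2 ^ k) → Bool,
      ⨆ p : {q : (Fin (2 ^ k) → ℝ) × Matrix (Fin (2 ^ k)) (Fin (2 ^ k)) ℝ //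
          (∀ j, |q.1 j| ≤ α j) ∧ (∀ j, euclNorm (q.2 j) ≤ β j) ∧
          specNorm q.2 ≤ ⨆ j, β j},
        ∑ i, sg (b i) * netS p.val.1 p.val.2 (Pi.single (grp k n i) 1) with hSS_def
  have step1 : ∑ b : Fin (n * 2 ^ k) → Bool,
      Sm * (∑ j, ((|sZ k n b j| : ℤ):ℝ)) / (4 * D) ≤ SS := by
    rw [hSS_def]
    exact Finset.sum_le_sum (fun b _ => perb k n α β hα hβ b)
  -- lower bound the LHS of step1
  have hTS : ∀ j : Fin (2^k), ((2:ℝ)^n)^(2^k - 1) * (2^n * Real.sqrt ((n:ℝ)/2))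
      ≤ ∑ b : Fin (n * 2 ^ k) → Bool, ((|sZ k n b j| : ℤ):ℝ) := by
    intro j
    have h1 : (∑ b : Fin (n * 2 ^ k) → Bool, ((|sZ k n b j| : ℤ):ℝ))
        = (((2:ℤ)^n)^(2^k - 1) * SA n : ℤ) := by
      rw [← TS_eq k n j]
      push_cast
      rfl
    rw [h1]
    have hsz := szarek n
    have hhalf : Real.sqrt ((n:ℝ)/2) ≤ Real.sqrt ((((n+1)/2 : ℕ)) : ℝ) := by
      apply Real.sqrt_le_sqrt
      have hnat : n ≤ 2 * ((n+1)/2) := by omega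
      have hc : (n:ℝ) ≤ 2 * (((n+1)/2 : ℕ) : ℝ) := by exact_mod_cast hnat
      linarith
    have hp0 : (0:ℝ) ≤ ((2:ℝ)^n)^(2^k - 1) := by positivity
    have h2 : ((2:ℝ)^n)^(2^k-1) * (2^n * Real.sqrt ((n:ℝ)/2))
        ≤ ((2:ℝ)^n)^(2^k-1) * (2^n * Real.sqrt ((((n+1)/2 : ℕ)) : ℝ)) := by
      apply mul_le_mul_of_nonneg_left _ hp0
      apply mul_le_mul_of_nonneg_left hhalf (by positivity)
    calc ((2:ℝ)^n)^(2^k-1) * (2^n * Real.sqrt ((n:ℝ)/2))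
        ≤ ((2:ℝ)^n)^(2^k-1) * (2^n * Real.sqrt ((((n+1)/2 : ℕ)) : ℝ)) := h2
      _ ≤ ((2:ℝ)^n)^(2^k-1) * (SA n : ℝ) := by
          apply mul_le_mul_of_nonneg_left hsz hp0
      _ = ((((2:ℤ)^n)^(2^k - 1) * SA n : ℤ) : ℝ) := by push_cast; ring
  have hpowm : ((2:ℝ)^n)^(2^k - 1) * 2^n = 2^(n * 2^k) := by
    rw [← pow_mul, ← pow_add]
    congr 1
    have h2k : 1 ≤ 2^k := Nat.one_le_two_pow
    cases' Nat.exists_eq_add_of_le h2k with d hd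
    rw [hd, Nat.add_sub_cancel_left]
    ring
  set s : ℝ := Real.sqrt ((n:ℝ)/2) with hs_def
  have hs0 : 0 ≤ s := Real.sqrt_nonneg _
  have hTS' : ∀ j : Fin (2^k), (2:ℝ)^(n * 2^k) * s
      ≤ ∑ b : Fin (n * 2 ^ k) → Bool, ((|sZ k n b j| : ℤ):ℝ) := by
    intro j
    have h := hTS j
    calc (2:ℝ)^(n * 2^k) * s = ((2:ℝ)^n)^(2^k - 1) * (2^n * s) := by
          rw [← hpowm]; ring
      _ ≤ _ := h
  have hjj : (2^k : ℝ) * ((2:ℝ)^(n * 2^k) * s)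
      ≤ ∑ j : Fin (2^k), ∑ b : Fin (n * 2 ^ k) → Bool, ((|sZ k n b j| : ℤ):ℝ) := by
    calc (2^k : ℝ) * ((2:ℝ)^(n * 2^k) * s)
        = ∑ _j : Fin (2^k), (2:ℝ)^(n * 2^k) * s := by
          rw [Finset.sum_const, Finset.card_univ, Fintype.card_fin, nsmul_eq_mul]
          push_cast; ring
      _ ≤ _ := Finset.sum_le_sum (fun j _ => hTS' j)
  have step2 : Sm * ((2^k : ℝ) * ((2:ℝ)^(n * 2^k) * s)) / (4 * D)
      ≤ ∑ b : Fin (n * 2 ^ k) → Bool, Sm * (∑ j, ((|sZ k n b j| : ℤ):ℝ)) / (4 * D) := by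
    have hsw : ∑ b : Fin (n * 2 ^ k) → Bool, Sm * (∑ j, ((|sZ k n b j| : ℤ):ℝ)) / (4 * D)
        = (Sm/(4*D)) * ∑ j : Fin (2^k), ∑ b : Fin (n * 2 ^ k) → Bool, ((|sZ k n b j| : ℤ):ℝ) := by
      calc ∑ b : Fin (n * 2 ^ k) → Bool, Sm * (∑ j, ((|sZ k n b j| : ℤ):ℝ)) / (4 * D)
          = ∑ b : Fin (n * 2 ^ k) → Bool, (Sm/(4*D)) * (∑ j, ((|sZ k n b j| : ℤ):ℝ)) := by
            apply Finset.sum_congr rfl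
            intro bb _
            ring
        _ = (Sm/(4*D)) * ∑ b : Fin (n * 2 ^ k) → Bool, (∑ j, ((|sZ k n b j| : ℤ):ℝ)) := by
            rw [← Finset.mul_sum]
        _ = (Sm/(4*D)) * ∑ j : Fin (2^k), ∑ b : Fin (n * 2 ^ k) → Bool, ((|sZ k n b j| : ℤ):ℝ) := by
            rw [Finset.sum_comm]
    rw [hsw]
    have hc0 : 0 ≤ Sm/(4*D) := div_nonneg hSm0 (by positivity)
    calc Sm * ((2^k : ℝ) * ((2:ℝ)^(n * 2^k) * s)) / (4 * D)
        = (Sm/(4*D)) * ((2^k : ℝ) * ((2:ℝ)^(n * 2^k) * s)) := by ring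
      _ ≤ (Sm/(4*D)) * ∑ j : Fin (2^k), ∑ b : Fin (n * 2 ^ k) → Bool, ((|sZ k n b j| : ℤ):ℝ) :=
          mul_le_mul_of_nonneg_left hjj hc0
  have hDD : D * D = (2^k : ℝ) := Real.mul_self_sqrt (by positivity)
  have hsq2 : Real.sqrt (2 * ((n:ℝ) * 2^k)) = 2 * s * D := by
    rw [show (2:ℝ) * ((n:ℝ) * 2^k) = (2*s*D)^2 by
      rw [mul_pow, mul_pow, hs_def, hD_def,
        Real.sq_sqrt (by positivity : (0:ℝ) ≤ (n:ℝ)/2),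
        Real.sq_sqrt (by positivity : (0:ℝ) ≤ (2:ℝ)^k)]
      ring]
    exact Real.sqrt_sq (by positivity)
  have hEq : Sm * ((2^k : ℝ) * ((2:ℝ)^(n * 2^k) * s)) / (4 * D)
      = 2^(n * 2^k) * (Sm * Real.sqrt (2 * ((n:ℝ) * 2^k)) / 8) := by
    rw [hsq2, div_eq_iff (ne_of_gt (by positivity : (0:ℝ) < 4*D))]
    rw [← hDD]
    ring
  have hC1 : SS / 2 ^ (n * 2 ^ k) ≥ Sm * Real.sqrt (2 * ((n:ℝ) * 2^k)) / 8 := by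
    rw [ge_iff_le, le_div_iff₀ (by positivity : (0:ℝ) < 2^(n * 2^k))]
    calc Sm * Real.sqrt (2 * ((n:ℝ) * 2^k)) / 8 * 2^(n * 2^k)
        = Sm * ((2^k : ℝ) * ((2:ℝ)^(n * 2^k) * s)) / (4 * D) := by
          rw [hEq]; ring
      _ ≤ ∑ b : Fin (n * 2 ^ k) → Bool, Sm * (∑ j, ((|sZ k n b j| : ℤ):ℝ)) / (4 * D) := step2
      _ ≤ SS := step1
  constructor
  · exact hC1
  · have hinv : (0:ℝ) ≤ 1 / ((n:ℝ) * 2^k) := by positivity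
    have h2 := mul_le_mul_of_nonneg_left (ge_iff_le.mp hC1) hinv
    calc (1 / ((n:ℝ) * 2 ^ k)) *
          (SS / 2 ^ (n * 2 ^ k))
        ≥ (1 / ((n:ℝ) * 2^k)) * (Sm * Real.sqrt (2 * ((n:ℝ) * 2^k)) / 8) := h2
      _ = Sm * Real.sqrt (2 * ((n:ℝ) * 2^k)) / (8 * ((n:ℝ) * 2^k)) := by
          ring


end
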